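/- Every α⁺-stable König-Egerváry graph has a perfect matching or a near-perfect matching (a matching covering all but exactly one vertex). -/

import Mathlib

open Finset

variable {V : Type*}

/-- A stable (independent) set of vertices. -/
def IsStableSet (G : SimpleGraph V) (s : Finset V) : Prop :=
  ∀ x ∈ s, ∀ y ∈ s, ¬ G.Adj x y

/-- The stability number α(G). -/
noncomputable def stabNum (G : SimpleGraph V) : ℕ :=
  sSup {n | ∃ s : Finset V, IsStableSet G s ∧ s.card = n}

/-- A matching: a set of edges of `G`, pairwise vertex-disjoint. -/
def IsMatchingSet (G : SimpleGraph V) (M : Finset (Sym2 V)) : Prop :=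
  (∀ e ∈ M, e ∈ G.edgeSet) ∧
    ∀ e ∈ M, ∀ f ∈ M, e ≠ f → ∀ v : V, v ∈ e → v ∉ f

/-- The matching number μ(G). -/
noncomputable def matchNum (G : SimpleGraph V) : ℕ :=
  sSup {n | ∃ M : Finset (Sym2 V), IsMatchingSet G M ∧ M.card = n}

/-- A maximum stable set. -/
def IsMaxStableSet (G : SimpleGraph V) (s : Finset V) : Prop :=
  IsStableSet G s ∧ s.card = stabNum G

/-- A maximum matching. -/
def IsMaxMatching (G : SimpleGraph V) (M : Finset (Sym2 V)) : Prop :=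
  IsMatchingSet G M ∧ M.card = matchNum G

/-- A perfect matching: a matching covering all vertices. -/
def IsPerfectMatchingSet (G : SimpleGraph V) (M : Finset (Sym2 V)) : Prop :=
  IsMatchingSet G M ∧ ∀ v : V, ∃ e ∈ M, v ∈ e

def HasPerfectMatching (G : SimpleGraph V) : Prop :=
  ∃ M, IsPerfectMatchingSet G M

/-- A near-perfect matching: exactly one vertex is uncovered. -/
def HasNearPerfectMatching (G : SimpleGraph V) : Prop :=
  ∃ M, IsMatchingSet G M ∧
    ∃ u : V, (∀ e ∈ M, u ∉ e) ∧ ∀ v : V, v ≠ u → ∃ e ∈ M, v ∈ e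

/-- A König-Egerváry graph: α(G) + μ(G) = |V(G)|. -/
def KonigEgervary (G : SimpleGraph V) : Prop :=
  stabNum G + matchNum G = Nat.card V

/-- G is α⁺-stable: adding any new edge leaves the stability number unchanged. -/
def AlphaPlusStable (G : SimpleGraph V) : Prop :=
  ∀ u v : V, u ≠ v → ¬ G.Adj u v →
    stabNum (G ⊔ SimpleGraph.fromEdgeSet {s(u, v)}) = stabNum G

/-- A blossom relative to the matching `M`: an odd cycle `x₀x₁…x₂ₖx₀` whose edges
`x₁x₂, x₃x₄, …, x₂ₖ₋₁x₂ₖ` belong to `M`. -/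
def HasBlossom (G : SimpleGraph V) (M : Finset (Sym2 V)) : Prop :=
  ∃ k : ℕ, 0 < k ∧ ∃ x : ℕ → V,
    (∀ i, i ≤ 2 * k → ∀ j, j ≤ 2 * k → x i = x j → i = j) ∧
    (∀ i < 2 * k, G.Adj (x i) (x (i + 1))) ∧
    G.Adj (x (2 * k)) (x 0) ∧
    ∀ i < k, s(x (2 * i + 1), x (2 * i + 2)) ∈ M

/-- G is blossom-free: no blossom relative to any maximum matching. -/
def BlossomFree (G : SimpleGraph V) : Prop :=
  ∀ M : Finset (Sym2 V), IsMaxMatching G M → ¬ HasBlossom G M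


section AuxForStmt8
open scoped Classical

variable [Fintype V] {G : SimpleGraph V}

lemma aux_stab_bdd (G : SimpleGraph V) :
    BddAbove {n | ∃ s : Finset V, IsStableSet G s ∧ s.card = n} :=
  ⟨Fintype.card V, fun _ ⟨s, _, hc⟩ => hc ▸ s.card_le_univ⟩

omit [Fintype V] in
lemma aux_stab_ne (G : SimpleGraph V) :
    Set.Nonempty {n | ∃ s : Finset V, IsStableSet G s ∧ s.card = n} :=
  ⟨0, ∅, fun x hx => absurd hx (notMem_empty x), rfl⟩

lemma aux_exists_max_stable (G : SimpleGraph V) :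
    ∃ s : Finset V, IsStableSet G s ∧ s.card = stabNum G :=
  Nat.sSup_mem (aux_stab_ne G) (aux_stab_bdd G)

lemma aux_card_le_stabNum {s : Finset V} (hs : IsStableSet G s) : s.card ≤ stabNum G :=
  le_csSup (aux_stab_bdd G) ⟨s, hs, rfl⟩

lemma aux_match_bdd (G : SimpleGraph V) :
    BddAbove {n | ∃ M : Finset (Sym2 V), IsMatchingSet G M ∧ M.card = n} :=
  ⟨Fintype.card (Sym2 V), fun _ ⟨M, _, hc⟩ => hc ▸ M.card_le_univ⟩

omit [Fintype V] in
lemma aux_match_ne (G : SimpleGraph V) :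
    Set.Nonempty {n | ∃ M : Finset (Sym2 V), IsMatchingSet G M ∧ M.card = n} :=
  ⟨0, ∅, ⟨fun e he => absurd he (notMem_empty e),
    fun e he => absurd he (notMem_empty e)⟩, rfl⟩

lemma aux_exists_max_matching (G : SimpleGraph V) :
    ∃ M : Finset (Sym2 V), IsMatchingSet G M ∧ M.card = matchNum G :=
  Nat.sSup_mem (aux_match_ne G) (aux_match_bdd G)

lemma aux_card_le_matchNum {M : Finset (Sym2 V)} (hM : IsMatchingSet G M) :
    M.card ≤ matchNum G :=
  le_csSup (aux_match_bdd G) ⟨M, hM, rfl⟩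

omit [Fintype V] in
lemma aux_edge_rep {M : Finset (Sym2 V)} (hM : IsMatchingSet G M) {e : Sym2 V} (he : e ∈ M) :
    ∃ a b : V, e = s(a, b) ∧ G.Adj a b := by
  induction e using Sym2.ind with
  | _ a b => exact ⟨a, b, rfl, (SimpleGraph.mem_edgeSet G).mp (hM.1 _ he)⟩

lemma aux_covered_card {M : Finset (Sym2 V)} (hM : IsMatchingSet G M) :
    (univ.filter fun v : V => ∃ e ∈ M, v ∈ e).card = 2 * M.card := by
  have heq : (univ.filter fun v : V => ∃ e ∈ M, v ∈ e)
      = M.biUnion (fun e => univ.filter (· ∈ e)) := by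
    ext v; simp
  rw [heq, card_biUnion]
  · rw [Finset.sum_congr rfl (fun e he => ?_), Finset.sum_const, smul_eq_mul, mul_comm]
    obtain ⟨a, b, rfl, hab⟩ := aux_edge_rep hM he
    have : (univ.filter (· ∈ s(a, b))) = {a, b} := by
      ext v; simp [Sym2.mem_iff]
    rw [this, card_pair hab.ne]
  · intro e he f hf hef
    simp only [Finset.disjoint_left, mem_filter]
    rintro v ⟨-, hv⟩ ⟨-, hv'⟩
    exact hM.2 e he f hf hef v hv hv'

omit [Fintype V] in
lemma aux_stable_inter_covered {M : Finset (Sym2 V)} (hM : IsMatchingSet G M)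
    {S : Finset V} (hS : IsStableSet G S) :
    (S.filter fun v => ∃ e ∈ M, v ∈ e).card ≤ M.card := by
  apply Finset.card_le_card_of_injOn
    (fun v => if h : ∃ e ∈ M, v ∈ e then h.choose else s(v, v))
  · intro v hv
    rw [Finset.mem_coe, mem_filter] at hv
    rw [Finset.mem_coe]
    beta_reduce
    rw [dif_pos hv.2]
    exact hv.2.choose_spec.1
  · intro u hu v hv huv
    simp only [Finset.coe_filter, Set.mem_setOf_eq] at hu hv
    simp only [dif_pos hu.2, dif_pos hv.2] at huv
    by_contra hne
    have heM : hu.2.choose ∈ M := hu.2.choose_spec.1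
    have hue : u ∈ hu.2.choose := hu.2.choose_spec.2
    have hve : v ∈ hu.2.choose := huv ▸ hv.2.choose_spec.2
    obtain ⟨a, b, heab, hab⟩ := aux_edge_rep hM heM
    rw [heab, Sym2.mem_iff] at hue hve
    rcases hue with rfl | rfl <;> rcases hve with rfl | rfl
    · exact hne rfl
    · exact hS u hu.1 v hv.1 hab
    · exact hS v hv.1 u hu.1 hab
    · exact hne rfl

end AuxForStmt8

theorem stmt_8 [Fintype V] (G : SimpleGraph V)
    (hKE : KonigEgervary G) (hst : AlphaPlusStable G) :
    HasPerfectMatching G ∨ HasNearPerfectMatching G := by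
  classical
  obtain ⟨M, hM, hMcard⟩ := aux_exists_max_matching G
  set U : Finset V := univ.filter (fun v => ∀ e ∈ M, v ∉ e) with hUdef
  -- U is stable
  have hUstable : IsStableSet G U := by
    intro x hx y hy hadj
    rw [hUdef, mem_filter] at hx hy
    have hnotin : s(x, y) ∉ M := fun h => hx.2 _ h (Sym2.mem_mk_left x y)
    have hM' : IsMatchingSet G (insert s(x, y) M) := by
      constructor
      · intro e he
        rcases mem_insert.mp he with rfl | he
        · exact hadj
        · exact hM.1 e he
      · intro e he f hf hef v hv
        rcases mem_insert.mp he with he' | he' <;> rcases mem_insert.mp hf with hf' | hf'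
        · exact absurd (he'.trans hf'.symm) hef
        · subst he'
          rw [Sym2.mem_iff] at hv
          rcases hv with rfl | rfl
          · exact hx.2 f hf'
          · exact hy.2 f hf'
        · subst hf'
          intro hvf
          rw [Sym2.mem_iff] at hvf
          rcases hvf with rfl | rfl
          · exact hx.2 e he' hv
          · exact hy.2 e he' hv
        · exact hM.2 e he' f hf' hef v hv
    have hle := aux_card_le_matchNum hM'
    rw [card_insert_of_notMem hnotin, hMcard] at hle
    omega
  -- counting: |V| = |U| + 2 μ
  have hcount : Fintype.card V = U.card + 2 * matchNum G := by
    have h1 : (univ.filter fun v : V => ∃ e ∈ M, v ∈ e).card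
        + (univ.filter fun v : V => ¬ ∃ e ∈ M, v ∈ e).card = Fintype.card V := by
      rw [Finset.card_filter_add_card_filter_not, Finset.card_univ]
    have h2 : U = univ.filter fun v : V => ¬ ∃ e ∈ M, v ∈ e := by
      ext v; simp [hUdef]
    rw [h2, ← h1, aux_covered_card hM, hMcard]
    omega
  -- α = |U| + μ
  have hKE' : stabNum G + matchNum G = Fintype.card V := by
    rw [← Nat.card_eq_fintype_card]; exact hKE
  have halpha : stabNum G = U.card + matchNum G := by omega
  -- every maximum stable set contains U
  have hcontain : ∀ S : Finset V, IsStableSet G S → S.card = stabNum G → U ⊆ S := by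
    intro S hS hScard
    have hsplit : (S.filter fun v => ∃ e ∈ M, v ∈ e).card
        + (S.filter fun v => ¬ ∃ e ∈ M, v ∈ e).card = S.card :=
      Finset.card_filter_add_card_filter_not _
    have hle : (S.filter fun v => ∃ e ∈ M, v ∈ e).card ≤ matchNum G :=
      hMcard ▸ aux_stable_inter_covered hM hS
    have hsub : (S.filter fun v => ¬ ∃ e ∈ M, v ∈ e) ⊆ U := by
      intro v hv
      rw [mem_filter] at hv
      rw [hUdef, mem_filter]
      exact ⟨mem_univ v, fun e he hve => hv.2 ⟨e, he, hve⟩⟩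
    have hcardle : U.card ≤ (S.filter fun v => ¬ ∃ e ∈ M, v ∈ e).card := by omega
    have := Finset.eq_of_subset_of_card_le hsub hcardle
    rw [← this]
    exact Finset.filter_subset _ _
  -- |U| ≤ 1
  have hUcard : U.card ≤ 1 := by
    by_contra hgt
    push_neg at hgt
    obtain ⟨u, hu, v, hv, huv⟩ := Finset.one_lt_card.mp hgt
    have hnadj : ¬ G.Adj u v := hUstable u hu v hv
    have hG' := hst u v huv hnadj
    obtain ⟨S', hS', hS'card⟩ :=
      aux_exists_max_stable (G ⊔ SimpleGraph.fromEdgeSet {s(u, v)})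
    have hS'G : IsStableSet G S' := fun x hx y hy hxy =>
      hS' x hx y hy ((SimpleGraph.sup_adj _ _ _ _).mpr (Or.inl hxy))
    have hUS : U ⊆ S' := hcontain S' hS'G (by rw [hS'card, hG'])
    exact hS' u (hUS hu) v (hUS hv)
      ((SimpleGraph.sup_adj _ _ _ _).mpr (Or.inr
        ((SimpleGraph.fromEdgeSet_adj _).mpr ⟨Set.mem_singleton _, huv⟩)))
  -- conclude
  rcases Nat.le_one_iff_eq_zero_or_eq_one.mp hUcard with h0 | h1
  · left
    refine ⟨M, hM, fun v => ?_⟩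
    by_contra h
    push_neg at h
    have : v ∈ U := by rw [hUdef, mem_filter]; exact ⟨mem_univ v, h⟩
    rw [Finset.card_eq_zero.mp h0] at this
    exact absurd this (notMem_empty v)
  · right
    obtain ⟨u, hu⟩ := Finset.card_eq_one.mp h1
    refine ⟨M, hM, u, ?_, fun v hvu => ?_⟩
    · have : u ∈ U := by rw [hu]; exact mem_singleton_self u
      rw [hUdef, mem_filter] at this
      exact this.2
    · by_contra h
      push_neg at h
      have : v ∈ U := by rw [hUdef, mem_filter]; exact ⟨mem_univ v, h⟩
      rw [hu, mem_singleton] at this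
      exact hvu this
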